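/- Let φ : [0,1] → L∞([0,1]) be the function assigning to each t ∈ [0,1] the equivalence class in L∞([0,1]) (with respect to Lebesgue measure) of the characteristic function of the interval [0,t]. Then φ is bounded and McShane integrable, but φ is not Bochner integrable. -/

import Mathlib

open MeasureTheory Filter Set

noncomputable section

/-- A McShane partition of `[0,1]`: a finite family of non-overlapping closed intervals
`[a i, b i]` covering `[0,1]`, with tags `t i ∈ [0,1]`. -/
def IsMcShanePartition (n : ℕ) (a b t : Fin n → ℝ) : Prop :=
  (∀ i, a i ≤ b i) ∧ (∀ i, t i ∈ Set.Icc (0:ℝ) 1) ∧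
  (⋃ i, Set.Icc (a i) (b i)) = Set.Icc (0:ℝ) 1 ∧
  Pairwise fun i j => Set.Ioo (a i) (b i) ∩ Set.Ioo (a j) (b j) = ∅

/-- The partition is subordinate to the gauge `δ`. -/
def SubordinateTo (n : ℕ) (a b t : Fin n → ℝ) (δ : ℝ → ℝ) : Prop :=
  ∀ i, t i - δ (t i) ≤ a i ∧ b i ≤ t i + δ (t i)

/-- `φ : [0,1] → X` is McShane integrable with integral `w`. -/
def HasMcShaneIntegral {X : Type*} [NormedAddCommGroup X] [NormedSpace ℝ X]
    (φ : ℝ → X) (w : X) : Prop :=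
  ∀ ε > (0:ℝ), ∃ δ : ℝ → ℝ, (∀ s ∈ Set.Icc (0:ℝ) 1, 0 < δ s) ∧
    ∀ (n : ℕ) (a b t : Fin n → ℝ), IsMcShanePartition n a b t →
      SubordinateTo n a b t δ →
      ‖w - ∑ i, (b i - a i) • φ (t i)‖ ≤ ε

/-- `wE` is the Pettis integral of `φ` over `E`. -/
def HasPettisIntegralOn {X : Type*} [NormedAddCommGroup X] [NormedSpace ℝ X]
    (φ : ℝ → X) (E : Set ℝ) (wE : X) : Prop :=
  ∀ f : X →L[ℝ] ℝ, IntegrableOn (fun s => f (φ s)) E volume ∧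
    (∫ s in E, f (φ s)) = f wE

/-- `φ : [0,1] → X` is Pettis integrable. -/
def PettisIntegrable {X : Type*} [NormedAddCommGroup X] [NormedSpace ℝ X]
    (φ : ℝ → X) : Prop :=
  ∀ E : Set ℝ, MeasurableSet E → E ⊆ Set.Icc (0:ℝ) 1 →
    ∃ wE : X, HasPettisIntegralOn φ E wE

/-- `P` is the product, over `ℕ`, of copies of the measure `μ`. -/
def IsNatPowerOf {S : Type*} [MeasurableSpace S] (μ : Measure S) (P : Measure (ℕ → S)) : Prop :=
  ∀ (F : Finset ℕ) (A : ℕ → Set S), (∀ i ∈ F, MeasurableSet (A i)) →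
    P {s | ∀ i ∈ F, s i ∈ A i} = ∏ i ∈ F, μ (A i)

/-- `φ : [0,1] → X` is Talagrand integrable with integral `w` : for almost every sequence
in `[0,1]` (for the product probability on `[0,1]^ℕ`) the averages of `φ` converge to `w`. -/
def HasTalagrandIntegral {X : Type*} [NormedAddCommGroup X] [NormedSpace ℝ X]
    (φ : ℝ → X) (w : X) : Prop :=
  ∀ P : Measure (ℕ → ℝ), IsNatPowerOf (volume.restrict (Set.Icc (0:ℝ) 1)) P →
    ∀ᵐ s ∂P, Tendsto (fun n : ℕ => (n : ℝ)⁻¹ • ∑ i ∈ Finset.range n, φ (s i))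
      atTop (nhds w)

def TalagrandIntegrable {X : Type*} [NormedAddCommGroup X] [NormedSpace ℝ X]
    (φ : ℝ → X) : Prop :=
  ∃ w, HasTalagrandIntegral φ w

/-- A set `A` of real-valued functions is stable with respect to `μ`. -/
def Stable {S : Type*} [MeasurableSpace S] (μ : Measure S) (A : Set (S → ℝ)) : Prop :=
  ∀ E : Set S, MeasurableSet E → 0 < μ E → ∀ α β : ℝ, α < β →
    ∃ m n : ℕ, 0 < m ∧ 0 < n ∧
      (Measure.prod (Measure.pi fun _ : Fin m => μ) (Measure.pi fun _ : Fin n => μ))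
        {p : (Fin m → S) × (Fin n → S) |
          (∀ i, p.1 i ∈ E) ∧ (∀ j, p.2 j ∈ E) ∧
          ∃ f ∈ A, (∀ i, f (p.1 i) ≤ α) ∧ (∀ j, β ≤ f (p.2 j))}
        < μ E ^ (m + n)

end

section Aux

open scoped ENNReal

variable {α : Type*} [MeasurableSpace α] {μ : Measure α}

lemma aux_coeFn_sum {ι : Type*} (s : Finset ι) (f : ι → Lp ℝ ⊤ μ) :
    ⇑(∑ i ∈ s, f i) =ᵐ[μ] fun x => ∑ i ∈ s, f i x := by
  classical
  induction s using Finset.induction_on with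
  | empty =>
      simp only [Finset.sum_empty]
      filter_upwards [Lp.coeFn_zero ℝ ⊤ μ] with x hx
      simpa using hx
  | insert c s' hnm ih =>
      rw [Finset.sum_insert hnm]
      filter_upwards [Lp.coeFn_add (f c) (∑ i ∈ s', f i), ih] with x hx hix
      simp only [hx, Pi.add_apply, hix, Finset.sum_insert hnm]

/-- A `1`-separated subset of a separable set is countable. -/
lemma aux_countable_of_separated {X : Type*} [MetricSpace X] {A B : Set X}
    (hB : TopologicalSpace.IsSeparable B) (hAB : A ⊆ B)
    (hsep : A.Pairwise fun x y => 1 ≤ dist x y) : A.Countable := by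
  obtain ⟨c, hc_count, hc_dense⟩ := hB
  have hcover : A ⊆ ⋃ y ∈ c, A ∩ Metric.ball y (1/2) := by
    intro x hx
    have hxc : x ∈ closure c := hc_dense (hAB hx)
    obtain ⟨y, hy, hd⟩ := Metric.mem_closure_iff.1 hxc (1/2) (by norm_num)
    exact Set.mem_biUnion hy ⟨hx, by simpa [Metric.mem_ball, dist_comm] using hd⟩
  refine Set.Countable.mono hcover (hc_count.biUnion fun y _ => ?_)
  refine Set.Subsingleton.countable ?_
  intro u hu v hv
  by_contra hne
  have := hsep hu.1 hv.1 hne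
  have h1 : dist u v ≤ dist u y + dist y v := dist_triangle _ _ _
  have h2 : dist u y < 1/2 := by simpa [Metric.mem_ball, dist_comm] using hu.2
  have h3 : dist y v < 1/2 := by simpa [Metric.mem_ball, dist_comm] using hv.2
  linarith

/-- Key combinatorial estimate for McShane sums. -/
lemma aux_mcshane_est {n : ℕ} {a b t : Fin n → ℝ} {ε : ℝ} (hε : 0 < ε)
    (hab : ∀ i, a i ≤ b i) (ht : ∀ i, t i ∈ Set.Icc (0:ℝ) 1)
    (hcov : (⋃ i, Set.Icc (a i) (b i)) = Set.Icc (0:ℝ) 1)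
    (hdisj : Pairwise fun i j => Set.Ioo (a i) (b i) ∩ Set.Ioo (a j) (b j) = ∅)
    (hsub : ∀ i, t i - ε ≤ a i ∧ b i ≤ t i + ε)
    {s : ℝ} (hs : s ∈ Set.Icc (0:ℝ) 1) :
    |∑ i ∈ Finset.univ.filter (fun i => s ≤ t i), (b i - a i) - (1 - s)| ≤ ε := by
  classical
  set T := Finset.univ.filter (fun i => s ≤ t i) with hT
  set A := ∑ i ∈ T, (b i - a i) with hA
  have hbounds : ∀ i, 0 ≤ a i ∧ b i ≤ 1 := by
    intro i
    have h1 : a i ∈ Set.Icc (0:ℝ) 1 := by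
      rw [← hcov]; exact Set.mem_iUnion.2 ⟨i, Set.left_mem_Icc.2 (hab i)⟩
    have h2 : b i ∈ Set.Icc (0:ℝ) 1 := by
      rw [← hcov]; exact Set.mem_iUnion.2 ⟨i, Set.right_mem_Icc.2 (hab i)⟩
    exact ⟨h1.1, h2.2⟩
  have hA0 : 0 ≤ A := Finset.sum_nonneg fun i _ => sub_nonneg.2 (hab i)
  have hofReal : ENNReal.ofReal A = ∑ i ∈ T, ENNReal.ofReal (b i - a i) :=
    ENNReal.ofReal_sum_of_nonneg fun i _ => sub_nonneg.2 (hab i)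
  -- upper bound
  have hup : A ≤ 1 - s + ε := by
    have hdisj' : (↑T : Set (Fin n)).PairwiseDisjoint fun i => Set.Ioo (a i) (b i) :=
      fun i _ j _ hij => Set.disjoint_iff_inter_eq_empty.2 (hdisj hij)
    have hsum : ∑ i ∈ T, volume (Set.Ioo (a i) (b i))
        = volume (⋃ i ∈ T, Set.Ioo (a i) (b i)) :=
      (measure_biUnion_finset hdisj' fun i _ => measurableSet_Ioo).symm
    have hsubset : (⋃ i ∈ T, Set.Ioo (a i) (b i)) ⊆ Set.Ioo (s - ε) 1 := by
      intro x hx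
      obtain ⟨i, hiT, hxi⟩ := Set.mem_iUnion₂.1 hx
      have hti : s ≤ t i := (Finset.mem_filter.1 hiT).2
      have h1 : s - ε ≤ a i := le_trans (by linarith) (hsub i).1
      exact ⟨lt_of_le_of_lt h1 hxi.1, lt_of_lt_of_le hxi.2 (hbounds i).2⟩
    have hle : ENNReal.ofReal A ≤ ENNReal.ofReal (1 - (s - ε)) := by
      rw [hofReal]
      calc ∑ i ∈ T, ENNReal.ofReal (b i - a i)
          = ∑ i ∈ T, volume (Set.Ioo (a i) (b i)) := by
            refine Finset.sum_congr rfl fun i _ => ?_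
            rw [Real.volume_Ioo]
        _ = volume (⋃ i ∈ T, Set.Ioo (a i) (b i)) := hsum
        _ ≤ volume (Set.Ioo (s - ε) 1) := measure_mono hsubset
        _ = ENNReal.ofReal (1 - (s - ε)) := Real.volume_Ioo
    have := (ENNReal.ofReal_le_ofReal_iff (by linarith [hs.2] : (0:ℝ) ≤ 1 - (s - ε))).1 hle
    linarith
  -- lower bound
  have hlow : 1 - s - ε ≤ A := by
    rcases le_or_gt (1 - s - ε) 0 with h | h
    · linarith
    · have hsubset : Set.Ioc (s + ε) 1 ⊆ ⋃ i ∈ T, Set.Icc (a i) (b i) := by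
        intro x hx
        have hx01 : x ∈ Set.Icc (0:ℝ) 1 := ⟨by linarith [hs.1, hx.1], hx.2⟩
        rw [← hcov] at hx01
        obtain ⟨i, hxi⟩ := Set.mem_iUnion.1 hx01
        have hti : s ≤ t i := by
          by_contra hlt
          push_neg at hlt
          have h1 := (hsub i).2
          have h2 := hxi.2
          have h3 := hx.1
          linarith
        exact Set.mem_iUnion₂.2 ⟨i, Finset.mem_filter.2 ⟨Finset.mem_univ i, hti⟩, hxi⟩
      have hle : ENNReal.ofReal (1 - (s + ε)) ≤ ENNReal.ofReal A := by
        rw [hofReal]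
        calc ENNReal.ofReal (1 - (s + ε))
            = volume (Set.Ioc (s + ε) 1) := Real.volume_Ioc.symm
          _ ≤ volume (⋃ i ∈ T, Set.Icc (a i) (b i)) := measure_mono hsubset
          _ ≤ ∑ i ∈ T, volume (Set.Icc (a i) (b i)) := measure_biUnion_finset_le _ _
          _ = ∑ i ∈ T, ENNReal.ofReal (b i - a i) := by
              refine Finset.sum_congr rfl fun i _ => ?_
              rw [Real.volume_Icc]
      have := (ENNReal.ofReal_le_ofReal_iff hA0).1 hle
      linarith
  rw [abs_le]
  constructor <;> linarith

end Aux

local notation "μ01" => MeasureTheory.Measure.restrict MeasureTheory.volume (Set.Icc (0:ℝ) 1)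

/-- 3F: the function `φ : [0,1] → L∞([0,1])` sending `t` to the class of the characteristic
function of `[0,t]` is bounded and McShane integrable, but not Bochner integrable. -/
theorem stmt17 (φ : ℝ → Lp ℝ ⊤ (volume.restrict (Set.Icc (0:ℝ) 1)))
    (hφ : ∀ t ∈ Set.Icc (0:ℝ) 1, φ t =
      indicatorConstLp ⊤ (measurableSet_Icc : MeasurableSet (Set.Icc (0:ℝ) t))
        ((lt_of_le_of_lt (Measure.restrict_apply_le _ _)
          (by simp [Real.volume_Icc] : volume (Set.Icc (0:ℝ) t) < ⊤)).ne)
        (1:ℝ)) :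
    (∃ M : ℝ, ∀ t ∈ Set.Icc (0:ℝ) 1, ‖φ t‖ ≤ M) ∧
    (∃ w, HasMcShaneIntegral φ w) ∧
    ¬ Integrable φ (volume.restrict (Set.Icc (0:ℝ) 1)) := by
  classical
  haveI : IsFiniteMeasure μ01 := by
    constructor
    rw [Measure.restrict_apply_univ]
    simp [Real.volume_Icc]
  -- Part 1: boundedness
  have hbdd : ∀ t ∈ Set.Icc (0:ℝ) 1, ‖φ t‖ ≤ 1 := by
    intro t ht
    rw [hφ t ht]
    refine le_trans norm_indicatorConstLp_le ?_
    simp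
  refine ⟨⟨1, hbdd⟩, ?_, ?_⟩
  · -- Part 2: McShane integrability
    have hwmem : MemLp (fun s : ℝ => 1 - s) ⊤ μ01 := by
      refine memLp_top_of_bound ((continuous_const.sub continuous_id).aestronglyMeasurable) 1 ?_
      refine (ae_restrict_iff' measurableSet_Icc).2 (ae_of_all _ fun x hx => ?_)
      rw [Real.norm_eq_abs, abs_le]
      constructor <;> [linarith [hx.2]; linarith [hx.1]]
    refine ⟨hwmem.toLp _, ?_⟩
    intro ε hε
    refine ⟨fun _ => ε, fun _ _ => hε, ?_⟩
    intro n a b t hpart hsubor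
    obtain ⟨hab, ht, hcov, hdisj⟩ := hpart
    set S : Lp ℝ ⊤ μ01 := ∑ i, (b i - a i) • φ (t i) with hS
    -- a.e. description of S
    have hSae : ∀ᵐ x ∂μ01, S x = ∑ i, (b i - a i) *
        (Set.Icc (0:ℝ) (t i)).indicator (fun _ => (1:ℝ)) x := by
      have hterm : ∀ᵐ x ∂μ01, ∀ i : Fin n, ((b i - a i) • φ (t i)) x
          = (b i - a i) * (Set.Icc (0:ℝ) (t i)).indicator (fun _ => (1:ℝ)) x := by
        rw [ae_all_iff]
        intro i
        have h1 := Lp.coeFn_smul (b i - a i) (φ (t i))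
        have h2 : ⇑(φ (t i)) =ᵐ[μ01] (Set.Icc (0:ℝ) (t i)).indicator (fun _ => (1:ℝ)) := by
          rw [hφ (t i) (ht i)]
          exact indicatorConstLp_coeFn
        filter_upwards [h1, h2] with x hx1 hx2
        rw [hx1, Pi.smul_apply, hx2, smul_eq_mul]
      filter_upwards [aux_coeFn_sum Finset.univ (fun i => (b i - a i) • φ (t i)), hterm]
        with x hx hx2
      rw [hS, hx]
      exact Finset.sum_congr rfl fun i _ => hx2 i
    -- a.e. bound on the difference
    have hbound : ∀ᵐ x ∂μ01, ‖(hwmem.toLp _ - S) x‖ ≤ ε := by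
      have hmem : ∀ᵐ x ∂μ01, x ∈ Set.Icc (0:ℝ) 1 := by
        exact ae_restrict_mem measurableSet_Icc
      filter_upwards [Lp.coeFn_sub (hwmem.toLp _) S, hwmem.coeFn_toLp, hSae, hmem]
        with x hx1 hx2 hx3 hx4
      rw [hx1, Pi.sub_apply, hx2, hx3]
      have hsum : ∑ i, (b i - a i) * (Set.Icc (0:ℝ) (t i)).indicator (fun _ => (1:ℝ)) x
          = ∑ i ∈ Finset.univ.filter (fun i => x ≤ t i), (b i - a i) := by
        rw [Finset.sum_filter]
        refine Finset.sum_congr rfl fun i _ => ?_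
        by_cases h : x ≤ t i
        · have hmem' : x ∈ Set.Icc (0:ℝ) (t i) := ⟨hx4.1, h⟩
          rw [if_pos h, Set.indicator_of_mem hmem', mul_one]
        · have hmem' : x ∉ Set.Icc (0:ℝ) (t i) := fun hc => h hc.2
          rw [if_neg h, Set.indicator_of_notMem hmem', mul_zero]
      rw [hsum, Real.norm_eq_abs, abs_sub_comm]
      exact aux_mcshane_est hε hab ht hcov hdisj hsubor hx4
    have := Lp.norm_le_of_ae_bound (le_of_lt hε) hbound
    simpa using this
  · -- Part 3: not Bochner integrable
    intro hInt
    obtain ⟨g, hg, hfg⟩ := hInt.aestronglyMeasurable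
    -- the set where φ = g inside [0,1]
    set D : Set ℝ := Set.Icc (0:ℝ) 1 ∩ {x | φ x = g x} with hD
    -- separation of values of φ
    have hsep : ∀ x ∈ Set.Icc (0:ℝ) 1, ∀ y ∈ Set.Icc (0:ℝ) 1, x < y →
        1 ≤ dist (φ x) (φ y) := by
      intro x hx y hy hxy
      have hioc : MeasurableSet (Set.Ioc x y) := measurableSet_Ioc
      have hμIoc : μ01 (Set.Ioc x y) = ENNReal.ofReal (y - x) := by
        have hsub' : Set.Ioc x y ⊆ Set.Icc (0:ℝ) 1 :=
          fun z hz => ⟨le_trans hx.1 (le_of_lt hz.1), le_trans hz.2 hy.2⟩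
        rw [Measure.restrict_apply hioc, Set.inter_eq_self_of_subset_left hsub',
          Real.volume_Ioc]
      have hμIoc_ne_top : μ01 (Set.Ioc x y) ≠ ⊤ := by rw [hμIoc]; exact ENNReal.ofReal_ne_top
      have hμIoc_ne_zero : μ01 (Set.Ioc x y) ≠ 0 := by
        rw [hμIoc]
        simpa using sub_pos.2 hxy
      have heq : φ y - φ x = indicatorConstLp ⊤ hioc hμIoc_ne_top (1:ℝ) := by
        apply Lp.ext
        have h1 : ⇑(φ y) =ᵐ[μ01] (Set.Icc (0:ℝ) y).indicator (fun _ => (1:ℝ)) := by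
          rw [hφ y hy]; exact indicatorConstLp_coeFn
        have h2 : ⇑(φ x) =ᵐ[μ01] (Set.Icc (0:ℝ) x).indicator (fun _ => (1:ℝ)) := by
          rw [hφ x hx]; exact indicatorConstLp_coeFn
        filter_upwards [Lp.coeFn_sub (φ y) (φ x), h1, h2,
          indicatorConstLp_coeFn (p := ⊤) (hs := hioc) (hμs := hμIoc_ne_top) (c := (1:ℝ))]
          with z hz1 hz2 hz3 hz4
        rw [hz1, Pi.sub_apply, hz2, hz3, hz4]
        by_cases h1' : z ∈ Set.Icc (0:ℝ) x
        · have hm1 : z ∈ Set.Icc (0:ℝ) y := ⟨h1'.1, le_trans h1'.2 (le_of_lt hxy)⟩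
          have hm2 : z ∉ Set.Ioc x y := fun hc => absurd h1'.2 (not_le.2 hc.1)
          rw [Set.indicator_of_mem h1', Set.indicator_of_mem hm1, Set.indicator_of_notMem hm2]
          ring
        · rw [Set.indicator_of_notMem h1']
          by_cases h2' : z ∈ Set.Icc (0:ℝ) y
          · have hzx : x < z := by
              by_contra hc
              exact h1' ⟨h2'.1, not_lt.1 hc⟩
            have hm3 : z ∈ Set.Ioc x y := ⟨hzx, h2'.2⟩
            rw [Set.indicator_of_mem h2', Set.indicator_of_mem hm3]
            ring
          · have hzio : z ∉ Set.Ioc x y := fun hc => h2' ⟨le_trans hx.1 (le_of_lt hc.1), hc.2⟩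
            rw [Set.indicator_of_notMem h2', Set.indicator_of_notMem hzio]
            ring
      rw [dist_eq_norm, ← norm_sub_rev, heq, norm_indicatorConstLp_top hμIoc_ne_zero, norm_one]
    -- D is not countable
    have hDunc : ¬ D.Countable := by
      intro hcount
      have hN : μ01 {x | ¬ φ x = g x} = 0 := ae_iff.1 hfg
      rw [Measure.restrict_apply' measurableSet_Icc] at hN
      have hsub : Set.Icc (0:ℝ) 1 ⊆ D ∪ ({x | ¬ φ x = g x} ∩ Set.Icc (0:ℝ) 1) := by
        intro x hx
        by_cases h : φ x = g x
        · exact Or.inl ⟨hx, h⟩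
        · exact Or.inr ⟨h, hx⟩
      have h1 : volume (Set.Icc (0:ℝ) 1) ≤ volume D + volume ({x | ¬ φ x = g x} ∩ Set.Icc (0:ℝ) 1) :=
        le_trans (measure_mono hsub) (measure_union_le _ _)
      rw [Real.volume_Icc, hcount.measure_zero, hN] at h1
      simp at h1
    -- g is injective on D
    have hginj : Set.InjOn g D := by
      intro x hx y hy hgxy
      by_contra hne
      have hgx : φ x = g x := hx.2
      have hgy : φ y = g y := hy.2
      have hd0 : dist (φ x) (φ y) = 0 := by rw [hgx, hgy, hgxy, dist_self]
      rcases (Ne.lt_or_gt hne) with h | h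
      · have := hsep x hx.1 y hy.1 h
        linarith
      · have := hsep y hy.1 x hx.1 h
        rw [dist_comm] at this
        linarith
    -- the image g '' D is 1-separated
    have himage : (g '' D).Pairwise fun u v => 1 ≤ dist u v := by
      rintro u ⟨x, hx, rfl⟩ v ⟨y, hy, rfl⟩ hne
      have hgx : φ x = g x := hx.2
      have hgy : φ y = g y := hy.2
      have hxy : x ≠ y := fun h => hne (by rw [h])
      rcases hxy.lt_or_gt with h | h
      · rw [← hgx, ← hgy]
        exact hsep x hx.1 y hy.1 h
      · rw [← hgx, ← hgy, dist_comm]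
        exact hsep y hy.1 x hx.1 h
    have hcnt : (g '' D).Countable :=
      aux_countable_of_separated hg.isSeparable_range (Set.image_subset_range g D) himage
    exact hDunc (Set.countable_of_injective_of_countable_image hginj hcnt)
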